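/- Let Ω = ⋃_{k=1}^∞ I_k, where (I_k)_{k∈ℕ} is a collection of pairwise disjoint nonempty open intervals in ℝ, and let ψ : Ω → Ω be injective and continuous. Then the following are equivalent: (1) ψ has no periodic points, i.e., ψ_n(x) ≠ x for every x ∈ Ω and every n ≥ 1; (2) ψ is run-away; (3) ψ is strongly run-away. -/

import Mathlib

open Set Function

lemma aux_mono_or_anti {J : Set ℝ} (hJ : J.OrdConnected) {f : ℝ → ℝ}
    (hc : ContinuousOn f J) (hi : Set.InjOn f J) :
    StrictMonoOn f J ∨ StrictAntiOn f J := by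
  by_cases H : StrictMonoOn f J
  · exact Or.inl H
  right
  rw [StrictMonoOn] at H
  push_neg at H
  obtain ⟨a, ha, b, hb, hab, hfab⟩ := H
  have hfba : f b < f a := lt_of_le_of_ne hfab (fun h => (hab.ne' (hi hb ha h)).elim)
  intro x hx y hy hxy
  set m := min a x with hm
  set M := max b y with hM
  have hmJ : m ∈ J := by rcases min_choice a x with h | h <;> rw [hm, h] <;> assumption
  have hMJ : M ∈ J := by rcases max_choice b y with h | h <;> rw [hM, h] <;> assumption
  have hIcc : Icc m M ⊆ J := hJ.out hmJ hMJ
  have hmM : m ≤ M := le_trans (min_le_left a x) (le_trans hab.le (le_max_left b y))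
  have haI : a ∈ Icc m M := ⟨min_le_left a x, le_trans hab.le (le_max_left b y)⟩
  have hbI : b ∈ Icc m M := ⟨le_trans (min_le_left a x) hab.le, le_max_left b y⟩
  have hxI : x ∈ Icc m M := ⟨min_le_right a x, le_trans hxy.le (le_max_right b y)⟩
  have hyI : y ∈ Icc m M := ⟨le_trans (min_le_right a x) hxy.le, le_max_right b y⟩
  rcases ContinuousOn.strictMonoOn_of_injOn_Icc' hmM (hc.mono hIcc) (hi.mono hIcc) with
    hmono | hanti
  · exact absurd (hmono haI hbI hab) (not_lt.2 hfba.le)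
  · exact hanti hxI hyI hxy

lemma escape_up {J : Set ℝ} (hJo : IsOpen J) (hJc : J.OrdConnected)
    {f : ℝ → ℝ} (hmap : Set.MapsTo f J J) (hcf : ContinuousOn f J)
    (hmono : MonotoneOn (f ∘ f) J)
    (hgt : ∀ x ∈ J, x < f (f x))
    {C K : Set ℝ} (hC : IsCompact C) (hCJ : C ⊆ J) (hK : IsCompact K) (hKJ : K ⊆ J) :
    ∃ T, ∀ t, T ≤ t → (f^[t] '' C) ∩ K = ∅ := by
  rcases C.eq_empty_or_nonempty with rfl | hCne
  · exact ⟨0, fun t _ => by simp⟩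
  rcases K.eq_empty_or_nonempty with rfl | hKne
  · exact ⟨0, fun t _ => by simp⟩
  set g := f ∘ f with hg
  have hmapg : Set.MapsTo g J J := fun x hx => hmap (hmap hx)
  have hcg : ContinuousOn g J := hcf.comp hcf hmap
  -- monotone and maps-to for iterates of g
  have hiter : ∀ s : ℕ, Set.MapsTo (g^[s]) J J ∧ MonotoneOn (g^[s]) J := by
    intro s
    induction s with
    | zero => exact ⟨fun x hx => by simpa using hx, fun x hx y hy hxy => by simpa using hxy⟩
    | succ s ih =>
      refine ⟨fun x hx => ?_, fun x hx y hy hxy => ?_⟩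
      · rw [Function.iterate_succ_apply']
        exact hmapg (ih.1 hx)
      · rw [Function.iterate_succ_apply', Function.iterate_succ_apply']
        exact hmono (ih.1 hx) (ih.1 hy) (ih.2 hx hy hxy)
  -- the supremum of K
  set M := sSup K with hM
  have hMK : M ∈ K := hK.sSup_mem hKne
  have hMJ : M ∈ J := hKJ hMK
  have hKle : ∀ y ∈ K, y ≤ M := fun y hy => le_csSup hK.bddAbove hy
  -- key escape fact
  have key : ∀ x ∈ J, ∃ S : ℕ, ∀ s, S ≤ s → M < g^[s] x := by
    intro x hx
    set u : ℕ → ℝ := fun s => g^[s] x with hu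
    have huJ : ∀ s, u s ∈ J := fun s => (hiter s).1 hx
    have hustep : ∀ s, u s < u (s + 1) := by
      intro s
      rw [hu]
      simp only [Function.iterate_succ_apply']
      exact hgt _ (huJ s)
    have humono : StrictMono u := strictMono_nat_of_lt_succ hustep
    by_contra hcon
    push_neg at hcon
    have hble : ∀ s, u s ≤ M := by
      intro s
      obtain ⟨s', hs', hle⟩ := hcon s
      exact le_trans (humono.monotone hs') hle
    have hbdd : BddAbove (Set.range u) := ⟨M, fun y ⟨s, hs⟩ => hs ▸ hble s⟩
    set L := ⨆ s, u s with hL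
    have htend : Filter.Tendsto u Filter.atTop (nhds L) :=
      tendsto_atTop_ciSup humono.monotone hbdd
    have hxL : x ≤ L := le_ciSup hbdd 0
    have hLM : L ≤ M := ciSup_le hble
    have hLJ : L ∈ J := hJc.out hx hMJ ⟨hxL, hLM⟩
    have hcgL : ContinuousAt g L := hcg.continuousAt (hJo.mem_nhds hLJ)
    have htend2 : Filter.Tendsto (fun s => u (s + 1)) Filter.atTop (nhds (g L)) := by
      have : (fun s => u (s + 1)) = g ∘ u := by
        funext s
        rw [hu]
        simp [Function.iterate_succ_apply']
      rw [this]
      exact hcgL.tendsto.comp htend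
    have htend3 : Filter.Tendsto (fun s => u (s + 1)) Filter.atTop (nhds L) :=
      htend.comp (Filter.tendsto_add_atTop_nat 1)
    have : g L = L := tendsto_nhds_unique htend2 htend3
    exact absurd this (ne_of_gt (hgt L hLJ))
  -- apply to min of C and min of f '' C
  have haC : sInf C ∈ C := hC.sInf_mem hCne
  have haJ : sInf C ∈ J := hCJ haC
  have hfC : IsCompact (f '' C) := hC.image_of_continuousOn (hcf.mono hCJ)
  have hfCJ : f '' C ⊆ J := fun y ⟨x, hx, hxy⟩ => hxy ▸ hmap (hCJ hx)
  have hfCne : (f '' C).Nonempty := hCne.image f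
  have haC' : sInf (f '' C) ∈ f '' C := hfC.sInf_mem hfCne
  have haJ' : sInf (f '' C) ∈ J := hfCJ haC'
  obtain ⟨S, hS⟩ := key _ haJ
  obtain ⟨S', hS'⟩ := key _ haJ'
  refine ⟨2 * max S S' + 2, fun t ht => ?_⟩
  rw [Set.eq_empty_iff_forall_notMem]
  rintro y ⟨⟨x, hxC, rfl⟩, hyK⟩
  have hxJ : x ∈ J := hCJ hxC
  rcases Nat.even_or_odd t with ⟨s, hs⟩ | ⟨s, hs⟩
  · -- t = s + s
    have ht2 : t = 2 * s := by omega
    have hsS : S ≤ s := by omega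
    have hfx : f^[t] x = g^[s] x := by
      rw [ht2, Function.iterate_mul]
      rfl
    have h1 : g^[s] (sInf C) ≤ g^[s] x :=
      (hiter s).2 haJ hxJ (csInf_le hC.bddBelow hxC)
    have h2 : M < g^[s] (sInf C) := hS s hsS
    have := hKle _ hyK
    rw [hfx] at this
    linarith [h2.trans_le h1]
  · -- t = 2 s + 1
    have hsS : S' ≤ s := by omega
    have hfx : f^[t] x = g^[s] (f x) := by
      rw [hs]
      rw [show (2*s+1) = (2*s)+1 from rfl, Function.iterate_succ_apply, Function.iterate_mul]
      rfl
    have hfxC : f x ∈ f '' C := ⟨x, hxC, rfl⟩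
    have h1 : g^[s] (sInf (f '' C)) ≤ g^[s] (f x) :=
      (hiter s).2 haJ' (hfCJ hfxC) (csInf_le hfC.bddBelow hfxC)
    have h2 : M < g^[s] (sInf (f '' C)) := hS' s hsS
    have := hKle _ hyK
    rw [hfx] at this
    linarith [h2.trans_le h1]

lemma escape {J : Set ℝ} (hJo : IsOpen J) (hJp : IsPreconnected J)
    {f : ℝ → ℝ} (hmap : Set.MapsTo f J J) (hcf : ContinuousOn f J) (hif : Set.InjOn f J)
    (hfix : ∀ x ∈ J, f (f x) ≠ x)
    {C K : Set ℝ} (hC : IsCompact C) (hCJ : C ⊆ J) (hK : IsCompact K) (hKJ : K ⊆ J) :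
    ∃ T, ∀ t, T ≤ t → (f^[t] '' C) ∩ K = ∅ := by
  rcases C.eq_empty_or_nonempty with rfl | hCne
  · exact ⟨0, fun t _ => by simp⟩
  have hJc : J.OrdConnected := hJp.ordConnected
  -- monotonicity of g = f ∘ f
  have hmono : MonotoneOn (f ∘ f) J := by
    rcases aux_mono_or_anti hJc hcf hif with h | h
    · exact (h.comp h hmap).monotoneOn
    · exact (h.comp h hmap).monotoneOn
  -- sign dichotomy for the displacement of g
  have hsign : (∀ x ∈ J, x < f (f x)) ∨ (∀ x ∈ J, f (f x) < x) := by
    by_contra hcon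
    push_neg at hcon
    obtain ⟨⟨a, ha, hfa⟩, ⟨b, hb, hfb⟩⟩ := hcon
    have hfa' : f (f a) < a := lt_of_le_of_ne hfa (hfix a ha)
    have hfb' : b < f (f b) := lt_of_le_of_ne hfb (Ne.symm (hfix b hb))
    set d : ℝ → ℝ := fun x => f (f x) - x with hd
    have hdc : ContinuousOn d J := ((hcf.comp hcf hmap).sub continuousOn_id)
    have hdJ : IsPreconnected (d '' J) := hJp.image d hdc
    have h0 : (0 : ℝ) ∈ d '' J := by
      have := hdJ.ordConnected.out (Set.mem_image_of_mem d ha) (Set.mem_image_of_mem d hb)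
      exact this ⟨by simp [hd]; linarith, by simp [hd]; linarith⟩
    obtain ⟨z, hz, hz0⟩ := h0
    have : f (f z) = z := by simp [hd] at hz0; linarith
    exact hfix z hz this
  rcases hsign with hup | hdown
  · exact escape_up hJo hJc hmap hcf hmono hup hC hCJ hK hKJ
  · -- reflect through negation
    set J' : Set ℝ := -J with hJ'
    have hmem : ∀ x : ℝ, x ∈ J' ↔ -x ∈ J := fun x => Set.mem_neg
    have hJo' : IsOpen J' := hJo.neg
    have hJc' : J'.OrdConnected := by
      constructor
      intro x hx y hy z hz
      rw [hmem] at hx hy ⊢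
      exact hJc.out hy hx ⟨neg_le_neg hz.2, neg_le_neg hz.1⟩
    set f' : ℝ → ℝ := fun x => -f (-x) with hf'
    have hmap' : Set.MapsTo f' J' J' := by
      intro x hx
      rw [hmem] at hx ⊢
      show - -f (-x) ∈ J
      simpa using hmap hx
    have hcf' : ContinuousOn f' J' := by
      apply ContinuousOn.neg
      exact hcf.comp continuousOn_neg (fun x hx => (hmem x).1 hx)
    have hff' : ∀ x, f' (f' x) = -f (f (-x)) := by intro x; simp [hf']
    have hmono' : MonotoneOn (f' ∘ f') J' := by
      intro x hx y hy hxy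
      rw [hmem] at hx hy
      simp only [Function.comp_apply, hff']
      exact neg_le_neg (hmono hy hx (neg_le_neg hxy))
    have hgt' : ∀ x ∈ J', x < f' (f' x) := by
      intro x hx
      rw [hmem] at hx
      rw [hff']
      have := hdown _ hx
      linarith
    have hC' : IsCompact (-C) := hC.neg
    have hK' : IsCompact (-K) := hK.neg
    have hCJ' : -C ⊆ J' := fun x hx => (hmem x).2 (hCJ hx)
    have hKJ' : -K ⊆ J' := fun x hx => (hmem x).2 (hKJ hx)
    obtain ⟨T, hT⟩ := escape_up hJo' hJc' hmap' hcf' hmono' hgt' hC' hCJ' hK' hKJ'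
    refine ⟨T, fun t ht => ?_⟩
    have hiter : ∀ (t : ℕ) (x : ℝ), f'^[t] (-x) = -f^[t] x := by
      intro t
      induction t with
      | zero => simp
      | succ t ih =>
        intro x
        rw [Function.iterate_succ_apply, Function.iterate_succ_apply]
        have : f' (-x) = -f x := by simp [hf']
        rw [this, ih]
    rw [Set.eq_empty_iff_forall_notMem]
    rintro y ⟨⟨x, hxC, rfl⟩, hyK⟩
    have : -f^[t] x ∈ (f'^[t] '' (-C)) ∩ (-K) := by
      constructor
      · exact ⟨-x, by simpa using hxC, hiter t x⟩
      · simpa using hyK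
    rw [hT t ht] at this
    exact this

/-- For an injective continuous self-map `ψ` of a countable union of pairwise disjoint
nonempty open intervals, the following are equivalent: (1) `ψ` has no periodic points;
(2) `ψ` is run-away; (3) `ψ` is strongly run-away. -/
theorem stmt_17 (I : ℕ → Set ℝ)
    (hopen : ∀ k, IsOpen (I k)) (hne : ∀ k, (I k).Nonempty)
    (hconn : ∀ k, IsPreconnected (I k))
    (hdisj : ∀ i j, i ≠ j → I i ∩ I j = ∅)
    (Ω : Set ℝ) (hΩ : Ω = ⋃ k, I k)
    (ψ : ↥Ω → ↥Ω) (hinj : Function.Injective ψ) (hcont : Continuous ψ) :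
    List.TFAE [
      ∀ x : ↥Ω, ∀ n : ℕ, 1 ≤ n → ψ^[n] x ≠ x,
      ∀ K : Set ↥Ω, IsCompact K → ∃ n : ℕ, 1 ≤ n ∧ (ψ^[n] '' K) ∩ K = ∅,
      ∀ K : Set ↥Ω, IsCompact K → ∃ N : ℕ, ∀ n, N ≤ n → (ψ^[n] '' K) ∩ K = ∅ ] := by
  classical
  -- basic setup
  have hsub : ∀ k, I k ⊆ Ω := fun k => hΩ ▸ Set.subset_iUnion I k
  have uniq : ∀ (x : ℝ) i j, x ∈ I i → x ∈ I j → i = j := by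
    intro x i j hi hj
    by_contra h
    have h2 := hdisj i j h
    exact absurd (Set.mem_inter hi hj) (by rw [h2]; exact Set.notMem_empty x)
  have hex : ∀ x : ↥Ω, ∃ k, (x : ℝ) ∈ I k := by
    intro x
    have hx : (x : ℝ) ∈ ⋃ k, I k := by rw [← hΩ]; exact x.2
    exact Set.mem_iUnion.1 hx
  choose idx hidx using hex
  have idx_eq : ∀ (x : ↥Ω) (k : ℕ), (x : ℝ) ∈ I k → idx x = k :=
    fun x k h => uniq _ _ _ (hidx x) h
  -- the step lemma: ψ maps each component into a single component
  have step : ∀ (k : ℕ) (x y : ↥Ω), (x : ℝ) ∈ I k → (y : ℝ) ∈ I k →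
      idx (ψ x) = idx (ψ y) := by
    intro k x y hx hy
    set T : Set ↥Ω := Subtype.val ⁻¹' (I k) with hT
    have himg : Subtype.val '' T = I k := by
      apply Set.Subset.antisymm
      · rintro z ⟨w, hw, rfl⟩; exact hw
      · intro z hz; exact ⟨⟨z, hsub k hz⟩, hz, rfl⟩
    have hTpre : IsPreconnected T :=
      Topology.IsInducing.subtypeVal.isPreconnected_image.1 (by rw [himg]; exact hconn k)
    set S : Set ℝ := Subtype.val '' (ψ '' T) with hS
    have hSpre : IsPreconnected S :=
      ((hTpre.image ψ hcont.continuousOn).image _ continuous_subtype_val.continuousOn)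
    set j := idx (ψ x) with hj
    have hSsub : S ⊆ I j ∪ ⋃ i, ⋃ (_ : i ≠ j), I i := by
      rintro z ⟨w, hw, rfl⟩
      by_cases h : idx w = j
      · left; rw [← h]; exact hidx w
      · right; exact Set.mem_iUnion.2 ⟨idx w, Set.mem_iUnion.2 ⟨h, hidx w⟩⟩
    have hdis : Disjoint (I j) (⋃ i, ⋃ (_ : i ≠ j), I i) := by
      rw [Set.disjoint_left]
      intro z hz hz'
      obtain ⟨i, hij, hzi⟩ := by simpa using hz'
      exact (by simpa using hij : i ≠ j) (uniq z i j hzi hz)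
    have hSne : (S ∩ I j).Nonempty :=
      ⟨(ψ x : ℝ), ⟨ψ x, ⟨x, hx, rfl⟩, rfl⟩, hidx (ψ x)⟩
    have hSj : S ⊆ I j := hSpre.subset_left_of_subset_union (hopen j)
      (isOpen_iUnion fun i => isOpen_iUnion fun _ => hopen i) hdis hSsub hSne
    have : (ψ y : ℝ) ∈ I j := hSj ⟨ψ y, ⟨y, hy, rfl⟩, rfl⟩
    exact (idx_eq _ _ this).symm ▸ rfl
  -- the induced map on component indices
  choose pt hpt using hne
  set σ : ℕ → ℕ := fun k => idx (ψ ⟨pt k, hsub k (hpt k)⟩) with hσdef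
  have hσ : ∀ x : ↥Ω, idx (ψ x) = σ (idx x) :=
    fun x => step (idx x) x ⟨pt (idx x), hsub _ (hpt (idx x))⟩ (hidx x) (hpt (idx x))
  have hσiter : ∀ (n : ℕ) (x : ↥Ω), idx (ψ^[n] x) = σ^[n] (idx x) := by
    intro n
    induction n with
    | zero => simp
    | succ n ih =>
      intro x
      rw [Function.iterate_succ_apply', Function.iterate_succ_apply', hσ, ih]
  -- extension of iterates of ψ to real functions
  set Φ : ℕ → ℝ → ℝ := fun p x => if h : x ∈ Ω then ((ψ^[p] ⟨x, h⟩ : ↥Ω) : ℝ) else x with hΦdef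
  have hΦval : ∀ (p : ℕ) (x : ↥Ω), Φ p (x : ℝ) = ((ψ^[p] x : ↥Ω) : ℝ) := by
    intro p x
    simp only [hΦdef, dif_pos x.2, Subtype.coe_eta]
  have hΦiter : ∀ (p t : ℕ) (x : ↥Ω), (Φ p)^[t] (x : ℝ) = ((ψ^[p * t] x : ↥Ω) : ℝ) := by
    intro p t
    induction t with
    | zero => simp
    | succ t ih =>
      intro x
      rw [Function.iterate_succ_apply, hΦval, ih (ψ^[p] x), ← Function.iterate_add_apply,
        Nat.mul_succ]
  have hΦcont : ∀ p, ContinuousOn (Φ p) Ω := by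
    intro p
    rw [continuousOn_iff_continuous_restrict]
    have h : Set.restrict Ω (Φ p) = fun x : ↥Ω => ((ψ^[p] x : ↥Ω) : ℝ) := by
      funext x
      exact hΦval p x
    change Continuous (Set.restrict Ω (Φ p))
    rw [h]
    exact continuous_subtype_val.comp (hcont.iterate p)
  -- clopen fibers
  have hUclosed : ∀ k, IsClosed (Subtype.val ⁻¹' (I k) : Set ↥Ω) := by
    intro k
    have h : (Subtype.val ⁻¹' (I k) : Set ↥Ω)ᶜ = ⋃ i, ⋃ (_ : i ≠ k), Subtype.val ⁻¹' (I i) := by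
      ext x
      simp only [Set.mem_compl_iff, Set.mem_preimage, Set.mem_iUnion]
      constructor
      · intro h; exact ⟨idx x, fun he => h (he ▸ hidx x), hidx x⟩
      · rintro ⟨i, hik, hx⟩ hk; exact hik (uniq _ _ _ hx hk)
    rw [← isOpen_compl_iff, h]
    exact isOpen_iUnion fun i => isOpen_iUnion fun _ => (hopen i).preimage continuous_subtype_val
  tfae_have 3 → 2 := by
    intro h3 K hK
    obtain ⟨N, hN⟩ := h3 K hK
    exact ⟨max N 1, le_max_right _ _, hN _ (le_max_left _ _)⟩
  tfae_have 2 → 1 := by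
    intro h2 x m hm
    by_contra heq
    set K : Set ↥Ω := (fun i => ψ^[i] x) '' (Set.Iio m) with hKdef
    have hKc : IsCompact K := ((Set.finite_Iio m).image _).isCompact
    obtain ⟨n, hn1, hempty⟩ := h2 K hKc
    have hmul : ∀ q : ℕ, ψ^[m * q] x = x := by
      intro q
      induction q with
      | zero => simp
      | succ q ih =>
        have : m * (q + 1) = m * q + m := by ring
        rw [this, Function.iterate_add_apply, heq, ih]
    have hmod : ∀ a : ℕ, ψ^[a] x = ψ^[a % m] x := by
      intro a
      conv_lhs => rw [← Nat.mod_add_div a m, Function.iterate_add_apply, hmul]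
    have hxK : x ∈ K := ⟨0, Set.mem_Iio.2 hm, by simp⟩
    have : ψ^[n] x ∈ (ψ^[n] '' K) ∩ K := by
      constructor
      · exact ⟨x, hxK, rfl⟩
      · rw [hmod n]
        exact ⟨n % m, Set.mem_Iio.2 (Nat.mod_lt _ hm), rfl⟩
    rw [hempty] at this
    exact this
  tfae_have 1 → 3 := by
    intro h1 K hK
    have hcover : K ⊆ ⋃ k, Subtype.val ⁻¹' (I k) :=
      fun x _ => Set.mem_iUnion.2 ⟨idx x, hidx x⟩
    obtain ⟨s, hs⟩ := hK.elim_finite_subcover (fun k => (Subtype.val ⁻¹' (I k) : Set ↥Ω))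
      (fun k => (hopen k).preimage continuous_subtype_val) hcover
    -- the per-component statement
    have main : ∀ k : ℕ, ∃ N, ∀ n, N ≤ n →
        (ψ^[n] '' (K ∩ Subtype.val ⁻¹' (I k))) ∩ K = ∅ := by
      intro k
      set Kk : Set ↥Ω := K ∩ Subtype.val ⁻¹' (I k) with hKkdef
      have hKkc : IsCompact Kk := hK.inter_right (hUclosed k)
      have hKkidx : ∀ x ∈ Kk, idx x = k := fun x hx => idx_eq x k hx.2
      have himg : ∀ (n : ℕ) (x : ↥Ω), x ∈ Kk → idx (ψ^[n] x) = σ^[n] k := by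
        intro n x hx
        rw [hσiter, hKkidx x hx]
      by_cases hA : ∃ N, ∀ n, N ≤ n → K ∩ Subtype.val ⁻¹' (I (σ^[n] k)) = ∅
      · obtain ⟨N, hN⟩ := hA
        refine ⟨N, fun n hn => ?_⟩
        rw [Set.eq_empty_iff_forall_notMem]
        rintro y ⟨⟨z, hz, rfl⟩, hyK⟩
        have : ψ^[n] z ∈ K ∩ Subtype.val ⁻¹' (I (σ^[n] k)) :=
          ⟨hyK, (himg n z hz) ▸ hidx _⟩
        rw [hN n hn] at this
        exact this
      · push_neg at hA
        set A : Set ℕ := {n | (K ∩ Subtype.val ⁻¹' (I (σ^[n] k))).Nonempty} with hAdef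
        have hmemA : ∀ n ∈ A, σ^[n] k ∈ s := by
          intro n hn
          obtain ⟨z, hzK, hzI⟩ := hn
          obtain ⟨i, his, hzi⟩ := Set.mem_iUnion₂.1 (hs hzK)
          rw [← uniq _ _ _ hzi hzI]
          exact his
        have hAinf : A.Infinite := by
          intro hfin
          obtain ⟨N, hN⟩ := hfin.bddAbove
          obtain ⟨n, hn, hne'⟩ := hA (N + 1)
          have : n ∈ A := hne'
          have := hN this
          omega
        have hfib : ∃ j ∈ s, {n | n ∈ A ∧ σ^[n] k = j}.Infinite := by
          by_contra hcon
          push_neg at hcon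
          have hsubA : A ⊆ ⋃ j ∈ s, {n | n ∈ A ∧ σ^[n] k = j} :=
            fun n hn => Set.mem_biUnion (hmemA n hn) ⟨hn, rfl⟩
          exact hAinf ((Set.Finite.biUnion s.finite_toSet
            (fun j hj => hcon j hj)).subset hsubA)
        obtain ⟨j, hjs, hjinf⟩ := hfib
        obtain ⟨n1, hn1A, hn1j⟩ := hjinf.nonempty
        obtain ⟨n2, hn2, hn12⟩ := hjinf.exists_gt n1
        obtain ⟨hn2A, hn2j⟩ := hn2
        set p := n2 - n1 with hpdef
        have hp : 1 ≤ p := by omega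
        have hper : σ^[p] j = j := by
          rw [← hn1j, ← Function.iterate_add_apply]
          rw [show p + n1 = n2 by omega, hn2j, hn1j]
        have hper_r : ∀ r, σ^[p] (σ^[r] j) = σ^[r] j := by
          intro r
          rw [← Function.iterate_add_apply, add_comm, Function.iterate_add_apply, hper]
        have hperiter : ∀ r t, σ^[p * t] (σ^[r] j) = σ^[r] j := by
          intro r t
          induction t with
          | zero => simp
          | succ t ih =>
            rw [show p * (t + 1) = p + p * t by ring, Function.iterate_add_apply, ih, hper_r]
        -- apply the escape lemma on each component in the cycle
        have hT : ∀ r : ℕ, ∃ T, ∀ t, T ≤ t →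
            ((Φ p)^[t] '' (Subtype.val '' (ψ^[n1 + r] '' Kk))) ∩
              (Subtype.val '' (K ∩ Subtype.val ⁻¹' (I (σ^[r] j)))) = ∅ := by
          intro r
          set jr := σ^[r] j with hjrdef
          have hmapJ : Set.MapsTo (Φ p) (I jr) (I jr) := by
            intro x hx
            have hxΩ : x ∈ Ω := hsub _ hx
            have h1' : Φ p x = ((ψ^[p] ⟨x, hxΩ⟩ : ↥Ω) : ℝ) := hΦval p ⟨x, hxΩ⟩
            rw [h1']
            have : idx (ψ^[p] ⟨x, hxΩ⟩) = jr := by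
              rw [hσiter, idx_eq ⟨x, hxΩ⟩ jr hx, hper_r]
            exact this ▸ hidx _
          have hcfJ : ContinuousOn (Φ p) (I jr) := (hΦcont p).mono (hsub _)
          have hinjJ : Set.InjOn (Φ p) (I jr) := by
            intro x hx y hy he
            have hxΩ : x ∈ Ω := hsub _ hx
            have hyΩ : y ∈ Ω := hsub _ hy
            rw [hΦval p ⟨x, hxΩ⟩, hΦval p ⟨y, hyΩ⟩] at he
            have := (hinj.iterate p) (Subtype.ext he)
            exact Subtype.mk_eq_mk.1 this
          have hfixJ : ∀ x ∈ I jr, Φ p (Φ p x) ≠ x := by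
            intro x hx
            have hxΩ : x ∈ Ω := hsub _ hx
            have e1 : Φ p x = ((ψ^[p] ⟨x, hxΩ⟩ : ↥Ω) : ℝ) := hΦval p ⟨x, hxΩ⟩
            have e2 : Φ p (Φ p x) = ((ψ^[p] (ψ^[p] ⟨x, hxΩ⟩) : ↥Ω) : ℝ) := by
              rw [e1, hΦval p (ψ^[p] ⟨x, hxΩ⟩)]
            rw [e2, ← Function.iterate_add_apply]
            intro hcontra
            exact h1 ⟨x, hxΩ⟩ (p + p) (by omega) (Subtype.ext hcontra)
          have hCc : IsCompact (Subtype.val '' (ψ^[n1 + r] '' Kk)) :=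
            (hKkc.image (hcont.iterate _)).image continuous_subtype_val
          have hCJ : Subtype.val '' (ψ^[n1 + r] '' Kk) ⊆ I jr := by
            rintro z ⟨y, ⟨x, hx, rfl⟩, rfl⟩
            have : idx (ψ^[n1 + r] x) = jr := by
              rw [himg (n1 + r) x hx, add_comm, Function.iterate_add_apply, hn1j]
            exact this ▸ hidx _
          have hKc' : IsCompact (Subtype.val '' (K ∩ Subtype.val ⁻¹' (I jr))) :=
            (hK.inter_right (hUclosed jr)).image continuous_subtype_val
          have hKJ' : Subtype.val '' (K ∩ Subtype.val ⁻¹' (I jr)) ⊆ I jr := by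
            rintro z ⟨y, ⟨_, hy⟩, rfl⟩
            exact hy
          exact escape (hopen jr) (hconn jr) hmapJ hcfJ hinjJ hfixJ hCc hCJ hKc' hKJ'
        choose T hT using hT
        set Tmax := (Finset.range p).sup T with hTmax
        refine ⟨n1 + p * (Tmax + 1), fun n hn => ?_⟩
        set d := n - n1 with hddef
        have hd : n = n1 + d := by omega
        have hdge : p * (Tmax + 1) ≤ d := by omega
        set r := d % p with hrdef
        set t := d / p with htdef
        have hrp : r < p := Nat.mod_lt _ (by omega)
        have htT : T r ≤ t := by
          have h1' : Tmax + 1 ≤ t := by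
            rw [htdef, Nat.le_div_iff_mul_le (by omega : 0 < p)]
            calc (Tmax + 1) * p = p * (Tmax + 1) := by ring
            _ ≤ d := hdge
          have h2' : T r ≤ Tmax := Finset.le_sup (Finset.mem_range.2 hrp)
          omega
        rw [Set.eq_empty_iff_forall_notMem]
        rintro y ⟨⟨x, hx, rfl⟩, hyK⟩
        have hdtr : d = p * t + r := (Nat.div_add_mod d p).symm
        have hneq : n = p * t + (n1 + r) := by omega
        have hsplit : ψ^[n] x = ψ^[p * t] (ψ^[n1 + r] x) := by
          rw [hneq, Function.iterate_add_apply]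
        -- the image point lies in the forbidden set
        have hmem1 : ((ψ^[n] x : ↥Ω) : ℝ) ∈ (Φ p)^[t] '' (Subtype.val '' (ψ^[n1 + r] '' Kk)) := by
          refine ⟨((ψ^[n1 + r] x : ↥Ω) : ℝ), ⟨ψ^[n1 + r] x, ⟨x, hx, rfl⟩, rfl⟩, ?_⟩
          rw [hΦiter p t (ψ^[n1 + r] x), ← hsplit]
        have hmem2 : ((ψ^[n] x : ↥Ω) : ℝ) ∈
            Subtype.val '' (K ∩ Subtype.val ⁻¹' (I (σ^[r] j))) := by
          refine ⟨ψ^[n] x, ⟨hyK, ?_⟩, rfl⟩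
          have : idx (ψ^[n] x) = σ^[r] j := by
            rw [himg n x hx, hneq, Function.iterate_add_apply, add_comm n1 r,
              Function.iterate_add_apply, hn1j, hperiter]
          exact this ▸ hidx _
        have := hT r t htT
        rw [Set.eq_empty_iff_forall_notMem] at this
        exact this _ ⟨hmem1, hmem2⟩
    choose Nk hNk using main
    refine ⟨s.sup Nk, fun n hn => ?_⟩
    rw [Set.eq_empty_iff_forall_notMem]
    rintro y ⟨⟨x, hxK, rfl⟩, hyK⟩
    obtain ⟨k, hks, hxk⟩ := Set.mem_iUnion₂.1 (hs hxK)
    have : ψ^[n] x ∈ (ψ^[n] '' (K ∩ Subtype.val ⁻¹' (I k))) ∩ K :=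
      ⟨⟨x, ⟨hxK, hxk⟩, rfl⟩, hyK⟩
    rw [hNk k n (le_trans (Finset.le_sup hks) hn)] at this
    exact this
  tfae_finish
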